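/- arXiv:1005.1528 — 2 statements merged into one kernel-verified Lean document; each statement's English description precedes it below -/
import Mathlib

section
/- There are no elements s, t of ℚ(i) with s·t ≠ 0 satisfying s^4 - 1 = t^2. -/
/-- `ℚ(i)`, the field of Gaussian rationals, realized as the fraction field of `ℤ[i]`. -/
local notation "K" => FractionRing GaussianInt

/-- The image of `i` in `ℚ(i)`. -/
local notation "I" => (algebraMap GaussianInt (FractionRing GaussianInt) Zsqrtd.sqrtd)

open Zsqrtd

namespace Stmt7Aux

/-- the element `i` of `ℤ[i]` -/
def ii : GaussianInt := ⟨0, 1⟩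
/-- `λ = 1 + i` -/
def lam : GaussianInt := ⟨1, 1⟩

lemma hii : ii * ii = -1 := by decide
lemma lam_sq : lam ^ 2 = 2 * ii := by decide
lemma lam_pow4 : lam ^ 4 = -4 := by decide
lemma two_eq : (2 : GaussianInt) = -ii * lam ^ 2 := by decide
lemma lam_ne : lam ≠ 0 := by decide
lemma isUnit_ii : IsUnit ii := IsUnit.of_mul_eq_one (-ii) (by linear_combination -hii)

lemma lam_dvd_iff (z : GaussianInt) : lam ∣ z ↔ (2 : ℤ) ∣ z.re + z.im := by
  constructor
  · rintro ⟨w, rfl⟩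
    refine ⟨w.re, ?_⟩
    simp [lam, Zsqrtd.re_mul, Zsqrtd.im_mul]
    ring
  · rintro ⟨k, hk⟩
    exact ⟨⟨k, k - z.re⟩, by ext <;> simp [lam, Zsqrtd.re_mul, Zsqrtd.im_mul] <;> omega⟩

lemma lam_dvd_two : lam ∣ 2 := by rw [lam_dvd_iff]; decide

lemma lam_not_dvd_ii : ¬ lam ∣ ii := by rw [lam_dvd_iff]; decide

lemma odd_add_odd {x y : GaussianInt} (hx : ¬ lam ∣ x) (hy : ¬ lam ∣ y) : lam ∣ x + y := by
  rw [lam_dvd_iff] at *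
  simp only [Zsqrtd.re_add, Zsqrtd.im_add]
  omega

lemma four_dvd_iff (z : GaussianInt) :
    (4 : GaussianInt) ∣ z ↔ (4 : ℤ) ∣ z.re ∧ (4 : ℤ) ∣ z.im := by
  have h : ((4 : ℤ) : GaussianInt) = (4 : GaussianInt) := by norm_cast
  rw [← h, Zsqrtd.intCast_dvd]

lemma prime_lam : Prime lam := by
  rw [← UniqueFactorizationMonoid.irreducible_iff_prime]
  constructor
  · intro hu
    have := Zsqrtd.norm_eq_one_iff.mpr hu
    simp [Zsqrtd.norm_def, lam] at this
  · intro a b hab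
    have hnorm : a.norm * b.norm = 2 := by
      rw [← Zsqrtd.norm_mul, ← hab]; decide
    have ha := Zsqrtd.norm_nonneg (by norm_num : (-1 : ℤ) ≤ 0) a
    have hb := Zsqrtd.norm_nonneg (by norm_num : (-1 : ℤ) ≤ 0) b
    have hd : a.norm ∣ 2 := ⟨b.norm, hnorm.symm⟩
    have h2 : a.norm ≤ 2 := Int.le_of_dvd (by norm_num) hd
    have h1 : a.norm = 1 ∨ b.norm = 1 := by
      rcases (by omega : a.norm = 0 ∨ a.norm = 1 ∨ a.norm = 2) with h | h | h
      · rw [h] at hnorm; omega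
      · exact Or.inl h
      · rw [h] at hnorm; right; omega
    rcases h1 with h | h
    · exact Or.inl (Zsqrtd.norm_eq_one_iff.mp (by rw [h]; rfl))
    · exact Or.inr (Zsqrtd.norm_eq_one_iff.mp (by rw [h]; rfl))

lemma unit_iff {u : GaussianInt} (hu : IsUnit u) :
    u = 1 ∨ u = -1 ∨ u = ii ∨ u = -ii := by
  have h := Zsqrtd.norm_eq_one_iff.mpr hu
  have hn := Zsqrtd.norm_nonneg (by norm_num : (-1 : ℤ) ≤ 0) u
  have h2 : u.re * u.re + u.im * u.im = 1 := by
    have : u.norm = 1 := by omega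
    simpa [Zsqrtd.norm_def] using this
  have hre : -1 ≤ u.re ∧ u.re ≤ 1 := by
    constructor <;> nlinarith [mul_self_nonneg u.im, mul_self_nonneg u.re]
  have him : -1 ≤ u.im ∧ u.im ≤ 1 := by
    constructor <;> nlinarith [mul_self_nonneg u.im, mul_self_nonneg u.re]
  have : (u.re = 0 ∧ (u.im = 1 ∨ u.im = -1)) ∨ (u.im = 0 ∧ (u.re = 1 ∨ u.re = -1)) := by
    rcases (by omega : u.re = -1 ∨ u.re = 0 ∨ u.re = 1) with h | h | h <;>
      rcases (by omega : u.im = -1 ∨ u.im = 0 ∨ u.im = 1) with h' | h' | h' <;>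
        rw [h, h'] at h2 <;> norm_num at h2 <;> tauto
  simp only [Zsqrtd.ext_iff]
  rcases this with ⟨h0, h1 | h1⟩ | ⟨h0, h1 | h1⟩ <;> simp [h0, h1, ii]

/-- squares of odd elements are `±1 (mod 4)`, equation form. -/
lemma sq_decomp {z : GaussianInt} (hz : ¬ lam ∣ z) :
    ∃ σ k : GaussianInt, (σ = 1 ∨ σ = -1) ∧ z ^ 2 = σ + 4 * k := by
  have hpar : ¬ (2 : ℤ) ∣ z.re + z.im := fun h => hz ((lam_dvd_iff z).mpr h)
  rcases Int.even_or_odd z.re with ⟨m, hm⟩ | ⟨m, hm⟩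
  · obtain ⟨n, hn⟩ : Odd z.im := by
      rcases Int.even_or_odd z.im with ⟨n, hn⟩ | h
      · omega
      · exact h
    refine ⟨-1, ⟨m^2 - n^2 - n, m * (2*n+1)⟩, Or.inr rfl, ?_⟩
    ext
    · show (z^2).re = (-1 + 4 * (⟨m^2 - n^2 - n, m * (2*n+1)⟩ : GaussianInt)).re
      simp [pow_two, Zsqrtd.re_mul, Zsqrtd.im_mul, hm, hn]; ring
    · show (z^2).im = (-1 + 4 * (⟨m^2 - n^2 - n, m * (2*n+1)⟩ : GaussianInt)).im
      simp [pow_two, Zsqrtd.re_mul, Zsqrtd.im_mul, hm, hn]; ring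
  · obtain ⟨n, hn⟩ : Even z.im := by
      rcases Int.even_or_odd z.im with h | ⟨n, hn⟩
      · exact h
      · exfalso; omega
    refine ⟨1, ⟨m^2 + m - n^2, n * (2*m+1)⟩, Or.inl rfl, ?_⟩
    ext
    · show (z^2).re = (1 + 4 * (⟨m^2 + m - n^2, n * (2*m+1)⟩ : GaussianInt)).re
      simp [pow_two, Zsqrtd.re_mul, Zsqrtd.im_mul, hm, hn]; ring
    · show (z^2).im = (1 + 4 * (⟨m^2 + m - n^2, n * (2*m+1)⟩ : GaussianInt)).im
      simp [pow_two, Zsqrtd.re_mul, Zsqrtd.im_mul, hm, hn]; ring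

lemma sq_mod4 {z : GaussianInt} (hz : ¬ lam ∣ z) :
    ∃ σ : GaussianInt, (σ = 1 ∨ σ = -1) ∧ (4 : GaussianInt) ∣ z ^ 2 - σ := by
  obtain ⟨σ, k, hσ, hk⟩ := sq_decomp hz
  exact ⟨σ, hσ, ⟨k, by linear_combination hk⟩⟩

/-- fourth powers of odd elements are `1 (mod 8)` -/
lemma pow4_mod8 {z : GaussianInt} (hz : ¬ lam ∣ z) : (8 : GaussianInt) ∣ z ^ 4 - 1 := by
  obtain ⟨σ, k, hσ, hk⟩ := sq_decomp hz
  rcases hσ with h | h <;> subst h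
  · exact ⟨k * (2 * k + 1), by linear_combination (z^2 + 4*k + 1) * hk⟩
  · exact ⟨k * (2 * k - 1), by linear_combination (z^2 + 4*k - 1) * hk⟩

lemma four_dvd_pow4_sub_one {z : GaussianInt} (hz : ¬ lam ∣ z) :
    (4 : GaussianInt) ∣ z ^ 4 - 1 :=
  dvd_trans ⟨2, by norm_num⟩ (pow4_mod8 hz)

lemma unit_coprime {u z : GaussianInt} (hu : IsUnit u) : IsCoprime z u := by
  obtain ⟨v, hv⟩ := hu.exists_right_inv
  exact ⟨0, v, by rw [zero_mul, zero_add, mul_comm]; exact hv⟩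

lemma odd_of_unit {u : GaussianInt} (hu : IsUnit u) : ¬ lam ∣ u := fun h =>
  prime_lam.not_unit (isUnit_of_dvd_unit h hu)

/-- The descent branch: from the data at level `n ≥ 1` with `lam ∣ X`, contradict IH. -/
lemma branch (n : ℕ) (hn : n ≠ 0)
    (IH : ∀ e₁ e₂ α β γ : GaussianInt, IsUnit e₁ → IsUnit e₂ → ¬ lam ∣ α → ¬ lam ∣ β →
      ¬ lam ∣ γ → IsCoprime α β → γ ^ 2 = e₁ * α ^ 4 + e₂ * lam ^ (4 * n) * β ^ 4 → False)
    (e₂' α β X Y : GaussianInt) (he : IsUnit e₂') (hα : ¬ lam ∣ α) (hβ : ¬ lam ∣ β)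
    (hcXY : IsCoprime X Y) (hprod : X * Y = e₂' * lam ^ (4 * n) * β ^ 4)
    (hrel : α ^ 2 = ii * Y - ii * X) (hdX : lam ∣ X) : False := by
  have hnY : ¬ lam ∣ Y := fun hdY => prime_lam.not_unit (hcXY.isUnit_of_dvd' hdX hdY)
  have hpowdvd : lam ^ (4 * n) ∣ X := by
    refine prime_lam.pow_dvd_of_dvd_mul_right (4 * n) hnY ?_
    exact ⟨e₂' * β ^ 4, by linear_combination hprod⟩
  obtain ⟨w, hX⟩ := hpowdvd
  have hw : w * Y = e₂' * β ^ 4 := by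
    apply mul_left_cancel₀ (pow_ne_zero (4 * n) lam_ne)
    calc lam ^ (4*n) * (w * Y) = (lam ^ (4*n) * w) * Y := by ring
    _ = X * Y := by rw [← hX]
    _ = e₂' * lam ^ (4*n) * β ^ 4 := hprod
    _ = lam ^ (4*n) * (e₂' * β ^ 4) := by ring
  have hwodd : ¬ lam ∣ w := by
    intro h
    have : lam ∣ e₂' * β ^ 4 := hw ▸ h.mul_right Y
    rcases prime_lam.dvd_mul.mp this with h' | h'
    · exact odd_of_unit he h'
    · exact hβ (prime_lam.dvd_of_dvd_pow h')
  have hcwY : IsCoprime w Y := by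
    obtain ⟨p, q, hpq⟩ := hcXY
    exact ⟨p * lam ^ (4 * n), q, by linear_combination hpq - p * hX⟩
  obtain ⟨einv, heinv⟩ := he.exists_right_inv
  have hprod2 : w * (einv * Y) = β ^ 4 := by
    linear_combination einv * hw + β ^ 4 * heinv
  have hcwY2 : IsCoprime w (einv * Y) := by
    obtain ⟨p, q, hpq⟩ := hcwY
    exact ⟨p, q * e₂', by linear_combination hpq + q * Y * heinv⟩
  obtain ⟨g, u₁, hgw, hu₁⟩ : ∃ g u₁, w = u₁ * g ^ 4 ∧ IsUnit u₁ := by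
    obtain ⟨d, u, hu⟩ := exists_associated_pow_of_mul_eq_pow' hcwY2 hprod2
    exact ⟨d, u, by rw [← hu]; ring, u.isUnit⟩
  obtain ⟨f, u₂, hfY, hu₂⟩ : ∃ f u₂, einv * Y = u₂ * f ^ 4 ∧ IsUnit u₂ := by
    obtain ⟨d, u, hu⟩ := exists_associated_pow_of_mul_eq_pow' hcwY2.symm
      (by rw [mul_comm] at hprod2; exact hprod2)
    exact ⟨d, u, by rw [← hu]; ring, u.isUnit⟩
  have hY : Y = e₂' * u₂ * f ^ 4 := by linear_combination e₂' * hfY - Y * heinv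
  have hfodd : ¬ lam ∣ f := by
    intro h
    apply hnY
    rw [hY]
    exact (dvd_pow h (by norm_num)).mul_left (e₂' * u₂)
  have hgodd : ¬ lam ∣ g := by
    intro h
    exact hwodd (hgw ▸ (dvd_pow h (by norm_num)).mul_left u₁)
  have hcfg : IsCoprime f g := by
    obtain ⟨p, q, hpq⟩ := hcwY2
    refine ⟨q * u₂ * f ^ 3, p * u₁ * g ^ 3, ?_⟩
    linear_combination hpq - p * hgw - q * hfY
  apply IH (ii * e₂' * u₂) (-(ii * u₁)) f g α (isUnit_ii.mul he |>.mul hu₂)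
    ((isUnit_ii.mul hu₁).neg) hfodd hgodd hα hcfg
  linear_combination hrel + ii * hY + ii * e₂' * u₂ * 0 - ii * hX - ii * lam ^ (4*n) * hgw

lemma keyH (n : ℕ) : ∀ e₁ e₂ α β γ : GaussianInt, IsUnit e₁ → IsUnit e₂ → ¬ lam ∣ α →
    ¬ lam ∣ β → ¬ lam ∣ γ → IsCoprime α β →
    γ ^ 2 = e₁ * α ^ 4 + e₂ * lam ^ (4 * n) * β ^ 4 → False := by
  induction n with
  | zero =>
    intro e₁ e₂ α β γ he₁ he₂ hα hβ hγ hcop heq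
    obtain ⟨σ, hσ, hdσ⟩ := sq_mod4 hγ
    have h4 : (4 : GaussianInt) ∣ e₁ + e₂ - σ := by
      have key : e₁ + e₂ - σ = (γ^2 - σ) - e₁*(α^4-1) - e₂*(β^4-1) := by
        linear_combination -heq
      rw [key]
      exact dvd_sub (dvd_sub hdσ ((four_dvd_pow4_sub_one hα).mul_left e₁))
        ((four_dvd_pow4_sub_one hβ).mul_left e₂)
    rcases unit_iff he₁ with h|h|h|h <;> rcases unit_iff he₂ with h'|h'|h'|h' <;>
      rcases hσ with hs|hs <;> subst h h' hs <;> rw [four_dvd_iff] at h4 <;> revert h4 <;> decide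
  | succ n IH =>
    intro e₁ e₂ α β γ he₁ he₂ hα hβ hγ hcop heq
    obtain ⟨σ, hσ, hdσ⟩ := sq_mod4 hγ
    have hlam4dvd : (4 : GaussianInt) ∣ lam ^ (4 * (n+1)) := by
      have h : lam ^ (4*(n+1)) = -4 * lam ^ (4*n) := by
        rw [show 4*(n+1) = 4 + 4*n by ring, pow_add, lam_pow4]
      rw [h]
      exact Dvd.dvd.mul_right ⟨-1, by ring⟩ _
    have h4 : (4 : GaussianInt) ∣ e₁ - σ := by
      have key : e₁ - σ = (γ^2 - σ) - e₁*(α^4-1) - e₂*lam^(4*(n+1))*β^4 := by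
        linear_combination -heq
      rw [key]
      exact dvd_sub (dvd_sub hdσ ((four_dvd_pow4_sub_one hα).mul_left e₁))
        ((hlam4dvd.mul_left e₂).mul_right _)
    have he₁' : e₁ = 1 ∨ e₁ = -1 := by
      rcases unit_iff he₁ with h|h|h|h <;> rcases hσ with hs|hs <;> subst h hs <;>
        first
          | (left; rfl)
          | (right; rfl)
          | (exfalso; rw [four_dvd_iff] at h4; revert h4; decide)
    obtain ⟨γ₁, e₂', he₂', hγ₁, heq'⟩ :
        ∃ γ₁ e₂', IsUnit e₂' ∧ ¬ lam ∣ γ₁ ∧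
          γ₁^2 = α^4 + e₂' * lam^(4*(n+1)) * β^4 := by
      rcases he₁' with h | h
      · exact ⟨γ, e₂, he₂, hγ, by rw [h] at heq; linear_combination heq⟩
      · refine ⟨ii*γ, -e₂, he₂.neg, ?_, ?_⟩
        · intro hdvd
          rcases prime_lam.dvd_mul.mp hdvd with h' | h'
          · exact lam_not_dvd_ii h'
          · exact hγ h'
        · rw [h] at heq
          linear_combination γ^2 * hii - heq
    clear heq hγ he₂ he₁ he₁' h4 hdσ hσ
    -- factor (γ₁ - α²)(γ₁ + α²)
    have hxy : (γ₁ - α^2) * (γ₁ + α^2) = e₂' * lam^(4*(n+1)) * β^4 := by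
      linear_combination heq'
    have hrhs : lam ∣ e₂' * lam^(4*(n+1)) * β^4 :=
      ((dvd_pow_self lam (by omega : 4*(n+1) ≠ 0)).mul_left e₂').mul_right _
    have hboth : lam ∣ (γ₁ - α^2) ∧ lam ∣ (γ₁ + α^2) := by
      rcases prime_lam.dvd_mul.mp (hxy ▸ hrhs) with h | h
      · refine ⟨h, ?_⟩
        have h2 : γ₁ + α^2 = (γ₁ - α^2) + 2*α^2 := by ring
        rw [h2]
        exact dvd_add h (lam_dvd_two.mul_right _)
      · refine ⟨?_, h⟩
        have h2 : γ₁ - α^2 = (γ₁ + α^2) - 2*α^2 := by ring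
        rw [h2]
        exact dvd_sub h (lam_dvd_two.mul_right _)
    obtain ⟨x₁, hx₁⟩ := hboth.1
    obtain ⟨y₁, hy₁⟩ := hboth.2
    have hxy₁ : x₁ * y₁ = e₂' * lam^(4*n+2) * β^4 := by
      apply mul_left_cancel₀ (pow_ne_zero 2 lam_ne)
      have h2exp : lam ^ (4*(n+1)) = lam^2 * lam^(4*n+2) := by
        rw [← pow_add]; congr 1; omega
      calc lam^2 * (x₁ * y₁) = (lam*x₁) * (lam*y₁) := by ring
        _ = (γ₁ - α^2) * (γ₁ + α^2) := by rw [← hx₁, ← hy₁]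
        _ = e₂' * (lam^2 * lam^(4*n+2)) * β^4 := by rw [hxy, h2exp]
        _ = lam^2 * (e₂' * lam^(4*n+2) * β^4) := by ring
    have hsum₁ : x₁ + y₁ = -ii * lam * γ₁ := by
      apply mul_left_cancel₀ lam_ne
      have h : lam * (x₁ + y₁) = (γ₁ - α^2) + (γ₁ + α^2) := by
        rw [mul_add, ← hx₁, ← hy₁]
      rw [h]
      linear_combination γ₁ * two_eq
    have hboth₁ : lam ∣ x₁ ∧ lam ∣ y₁ := by
      have hs : lam ∣ x₁ + y₁ := by
        rw [hsum₁]; exact ⟨-ii * γ₁, by ring⟩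
      have hrhs₁ : lam ∣ e₂' * lam^(4*n+2) * β^4 :=
        ((dvd_pow_self lam (by omega : 4*n+2 ≠ 0)).mul_left e₂').mul_right _
      rcases prime_lam.dvd_mul.mp (hxy₁ ▸ hrhs₁) with h | h
      · exact ⟨h, (dvd_add_right h).mp hs⟩
      · refine ⟨?_, h⟩
        have h2 : x₁ = (x₁ + y₁) - y₁ := by ring
        rw [h2]; exact dvd_sub hs h
    obtain ⟨x₂, hx₂⟩ := hboth₁.1
    obtain ⟨y₂, hy₂⟩ := hboth₁.2
    have hxy₂ : x₂ * y₂ = e₂' * lam^(4*n) * β^4 := by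
      apply mul_left_cancel₀ (pow_ne_zero 2 lam_ne)
      have h2exp : lam ^ (4*n+2) = lam^2 * lam^(4*n) := by
        rw [← pow_add]; congr 1; omega
      calc lam^2 * (x₂ * y₂) = (lam*x₂) * (lam*y₂) := by ring
        _ = x₁ * y₁ := by rw [← hx₂, ← hy₂]
        _ = e₂' * (lam^2 * lam^(4*n)) * β^4 := by rw [hxy₁, h2exp]
        _ = lam^2 * (e₂' * lam^(4*n) * β^4) := by ring
    have hsum₂ : x₂ + y₂ = -ii * γ₁ := by
      apply mul_left_cancel₀ lam_ne
      have h : lam * (x₂ + y₂) = x₁ + y₁ := by rw [mul_add, ← hx₂, ← hy₂]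
      rw [h, hsum₁]; ring
    have hdiff₂ : y₂ - x₂ = -ii * α^2 := by
      apply mul_left_cancel₀ (pow_ne_zero 2 lam_ne)
      have h : lam^2 * (y₂ - x₂) = (γ₁ + α^2) - (γ₁ - α^2) := by
        rw [hy₁, hx₁, hy₂, hx₂]; ring
      rw [h]
      linear_combination α^2 * two_eq
    -- coprimality of x₂, y₂
    have hcoplam : IsCoprime lam α := (prime_lam.coprime_iff_not_dvd).mpr hα
    have hK : IsCoprime (α^4) (e₂' * lam^(4*(n+1)) * β^4) := by
      apply IsCoprime.pow_left
      apply IsCoprime.mul_right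
      · exact (unit_coprime he₂').mul_right hcoplam.symm.pow_right
      · exact hcop.pow_right
    have hcαγ : IsCoprime (α^2) γ₁ := by
      have h1 : IsCoprime (α^4) (γ₁^2) := by
        have h2 := hK.add_mul_left_right 1
        rw [mul_one] at h2
        have h3 : e₂' * lam^(4*(n+1)) * β^4 + α^4 = γ₁^2 := by linear_combination -heq'
        rwa [h3] at h2
      have h2 : IsCoprime α γ₁ :=
        (IsCoprime.pow_right_iff (by norm_num : 0 < 2)).mp
          ((IsCoprime.pow_left_iff (by norm_num : 0 < 4)).mp h1)
      exact h2.pow_left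
    have hγ₁eq : γ₁ = ii * x₂ + ii * y₂ := by
      linear_combination (-ii) * hsum₂ + γ₁ * hii
    have hasqeq : α^2 = ii * y₂ - ii * x₂ := by
      linear_combination -ii * hdiff₂ + α^2 * hii
    have hcx₂y₂ : IsCoprime x₂ y₂ := by
      obtain ⟨p, q, hpq⟩ := hcαγ
      refine ⟨q*ii - p*ii, p*ii + q*ii, ?_⟩
      linear_combination hpq - p * hasqeq - q * hγ₁eq
    -- branch on n
    rcases Nat.eq_zero_or_pos n with hn0 | hn0
    · subst hn0
      have hx₂odd : ¬ lam ∣ x₂ := by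
        intro h
        have hdd : lam ∣ e₂' * lam^(4*0) * β^4 := hxy₂ ▸ h.mul_right y₂
        rw [show (4*0 : ℕ) = 0 by rfl, pow_zero, mul_one] at hdd
        rcases prime_lam.dvd_mul.mp hdd with h' | h'
        · exact odd_of_unit he₂' h'
        · exact hβ (prime_lam.dvd_of_dvd_pow h')
      have hy₂odd : ¬ lam ∣ y₂ := by
        intro h
        have hdd : lam ∣ e₂' * lam^(4*0) * β^4 := hxy₂ ▸ h.mul_left x₂
        rw [show (4*0 : ℕ) = 0 by rfl, pow_zero, mul_one] at hdd
        rcases prime_lam.dvd_mul.mp hdd with h' | h'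
        · exact odd_of_unit he₂' h'
        · exact hβ (prime_lam.dvd_of_dvd_pow h')
      have hsodd : lam ∣ x₂ + y₂ := odd_add_odd hx₂odd hy₂odd
      rw [hsum₂] at hsodd
      rcases prime_lam.dvd_mul.mp hsodd with h' | h'
      · exact lam_not_dvd_ii (by
          have : lam ∣ - ii := h'
          exact (dvd_neg.mp this))
      · exact hγ₁ h'
    · -- n ≥ 1 : descend
      have hrhs₂ : lam ∣ e₂' * lam^(4*n) * β^4 :=
        ((dvd_pow_self lam (by omega : 4*n ≠ 0)).mul_left e₂').mul_right _
      rcases prime_lam.dvd_mul.mp (hxy₂ ▸ hrhs₂) with h | h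
      · exact branch n (by omega) IH e₂' α β x₂ y₂ he₂' hα hβ hcx₂y₂ hxy₂ hasqeq h
      · refine branch n (by omega) IH e₂' (ii*α) β y₂ x₂ he₂' ?_ hβ hcx₂y₂.symm
          (by rw [mul_comm] at hxy₂; exact hxy₂) ?_ h
        · intro hdvd
          rcases prime_lam.dvd_mul.mp hdvd with h' | h'
          · exact lam_not_dvd_ii h'
          · exact hα h'
        · linear_combination ii * ii * hasqeq + ii * (y₂ - x₂) * hii


lemma odd_mul_unit {u z : GaussianInt} (hu : IsUnit u) (hz : ¬ lam ∣ z) : ¬ lam ∣ u * z := by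
  intro h
  rcases prime_lam.dvd_mul.mp h with h' | h'
  · exact odd_of_unit hu h'
  · exact hz h'

lemma mainL (a b c : GaussianInt) (hcop : IsCoprime a b) (ha : a ≠ 0) (hb : b ≠ 0)
    (hc : c ≠ 0) (heq : a ^ 4 - b ^ 4 = c ^ 2) : False := by
  by_cases hda : lam ∣ a <;> by_cases hdb : lam ∣ b
  · exact prime_lam.not_unit (hcop.isUnit_of_dvd' hda hdb)
  · -- a even, b odd : apply keyH to (ii*c)² = b⁴ - a⁴
    obtain ⟨m, a₀, ha₀, hafac⟩ := WfDvdMonoid.max_power_factor ha prime_lam.irreducible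
    have hm : m ≠ 0 := by
      intro h
      rw [h, pow_zero, one_mul] at hafac
      exact ha₀ (hafac ▸ hda)
    have hcodd : ¬ lam ∣ c := by
      intro h
      apply hdb
      apply prime_lam.dvd_of_dvd_pow (n := 4)
      have h1 : b ^ 4 = a ^ 4 - c ^ 2 := by linear_combination -heq
      rw [h1]
      exact dvd_sub (dvd_pow hda (by norm_num)) (dvd_pow h (by norm_num))
    have hcop' : IsCoprime b a₀ := by
      obtain ⟨p, q, hpq⟩ := hcop
      exact ⟨q, p * lam ^ m, by linear_combination hpq - p * hafac⟩
    refine keyH m 1 (-1) b a₀ (ii * c) isUnit_one isUnit_one.neg hdb ha₀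
      (odd_mul_unit isUnit_ii hcodd) hcop' ?_
    have h4 : a ^ 4 = lam ^ (4 * m) * a₀ ^ 4 := by
      rw [hafac, mul_pow, ← pow_mul, mul_comm m 4]
    linear_combination c^2 * hii + heq - h4
  · -- b even, a odd
    obtain ⟨m, b₀, hb₀, hbfac⟩ := WfDvdMonoid.max_power_factor hb prime_lam.irreducible
    have hm : m ≠ 0 := by
      intro h
      rw [h, pow_zero, one_mul] at hbfac
      exact hb₀ (hbfac ▸ hdb)
    have hcodd : ¬ lam ∣ c := by
      intro h
      apply hda
      apply prime_lam.dvd_of_dvd_pow (n := 4)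
      have h1 : a ^ 4 = b ^ 4 + c ^ 2 := by linear_combination heq
      rw [h1]
      exact dvd_add (dvd_pow hdb (by norm_num)) (dvd_pow h (by norm_num))
    have hcop' : IsCoprime a b₀ := by
      obtain ⟨p, q, hpq⟩ := hcop
      exact ⟨p, q * lam ^ m, by linear_combination hpq - q * hbfac⟩
    refine keyH m 1 (-1) a b₀ c isUnit_one isUnit_one.neg hda hb₀ hcodd hcop' ?_
    have h4 : b ^ 4 = lam ^ (4 * m) * b₀ ^ 4 := by
      rw [hbfac, mul_pow, ← pow_mul, mul_comm m 4]
    linear_combination -heq - h4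
  · -- both odd
    obtain ⟨σa, k, hσa, hk⟩ := sq_decomp hda
    obtain ⟨σb, l, hσb, hl⟩ := sq_decomp hdb
    -- replace b by ii*b if the signs differ, so that both squares are σa mod 4
    obtain ⟨b', hb'odd, hb'cop, hb'4, l', hl'⟩ :
        ∃ b', ¬ lam ∣ b' ∧ IsCoprime a b' ∧ b' ^ 4 = b ^ 4 ∧
          ∃ l', b' ^ 2 = σa + 4 * l' := by
      rcases hσa with h1 | h1 <;> rcases hσb with h2 | h2 <;> subst h1 h2
      · exact ⟨b, hdb, hcop, rfl, l, hl⟩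
      · exact ⟨ii * b, odd_mul_unit isUnit_ii hdb, (unit_coprime isUnit_ii).mul_right hcop,
          by linear_combination b^4 * (ii*ii - 1) * hii,
          -l, by linear_combination b^2 * hii - hl⟩
      · exact ⟨ii * b, odd_mul_unit isUnit_ii hdb, (unit_coprime isUnit_ii).mul_right hcop,
          by linear_combination b^4 * (ii*ii - 1) * hii,
          -l, by linear_combination b^2 * hii - hl⟩
      · exact ⟨b, hdb, hcop, rfl, l, hl⟩
    have heq' : a ^ 4 - b' ^ 4 = c ^ 2 := by rw [hb'4]; exact heq
    set P : GaussianInt := 2 * (k - l') with hP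
    set Q : GaussianInt := σa + 2 * (k + l') with hQ
    have haPQ : a ^ 2 = P + Q := by rw [hP, hQ]; linear_combination hk
    have hbPQ : b' ^ 2 = Q - P := by rw [hP, hQ]; linear_combination hl'
    have hPQ : c ^ 2 = 4 * (P * Q) := by
      rw [hP, hQ]
      linear_combination -heq' + (a^2 + σa + 4*k) * hk - (b'^2 + σa + 4*l') * hl'
    -- 2 ∣ c
    have hl1 : lam ∣ c := by
      apply prime_lam.dvd_of_dvd_pow (n := 2)
      rw [hPQ]
      exact Dvd.dvd.mul_right ⟨-(lam^3), by linear_combination lam_pow4⟩ _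
    obtain ⟨c₁, hc₁⟩ := hl1
    have hl2 : lam ∣ c₁ := by
      have h1 : lam ^ 2 * c₁ ^ 2 = 4 * (P * Q) := by
        rw [← hPQ, hc₁]; ring
      have h2 : c₁ ^ 2 = -lam ^ 2 * (P * Q) := by
        apply mul_left_cancel₀ (pow_ne_zero 2 lam_ne)
        rw [h1]
        linear_combination (P * Q) * lam_pow4
      apply prime_lam.dvd_of_dvd_pow (n := 2)
      rw [h2]
      exact (Dvd.dvd.mul_right ⟨-lam, by ring⟩ _)
    obtain ⟨c₂, hc₂⟩ := hl2
    have hcc : c = 2 * (ii * c₂) := by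
      rw [hc₁, hc₂]
      linear_combination c₂ * lam_sq
    have hccsq : (ii * c₂) ^ 2 = P * Q := by
      have h4 : (4 : GaussianInt) * ((ii*c₂)^2) = 4 * (P * Q) := by
        rw [← hPQ, hcc]; ring
      exact mul_left_cancel₀ (by decide : (4 : GaussianInt) ≠ 0) h4
    -- coprime P Q
    have hcPQ : IsCoprime P Q := by
      obtain ⟨p, q, hpq⟩ := (hb'cop.pow : IsCoprime (a ^ 2) (b' ^ 2))
      exact ⟨p - q, p + q, by linear_combination hpq - p * haPQ - q * hbPQ⟩
    -- unit-square decompositions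
    obtain ⟨r, u₁, hPr, hu₁⟩ : ∃ r u₁, P = u₁ * r ^ 2 ∧ IsUnit u₁ := by
      obtain ⟨d, u, hu⟩ := exists_associated_pow_of_mul_eq_pow' hcPQ hccsq.symm
      exact ⟨d, u, by rw [← hu]; ring, u.isUnit⟩
    obtain ⟨w, u₂, hQw, hu₂⟩ : ∃ w u₂, Q = u₂ * w ^ 2 ∧ IsUnit u₂ := by
      obtain ⟨d, u, hu⟩ := exists_associated_pow_of_mul_eq_pow' (k := 2) hcPQ.symm
        (show Q * P = (ii*c₂)^2 from by rw [mul_comm]; exact hccsq.symm)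
      exact ⟨d, u, by rw [← hu]; ring, u.isUnit⟩
    have hrdvd : lam ∣ r := by
      have h1 : lam ∣ P := by
        rw [hP]
        exact lam_dvd_two.mul_right _
      rw [hPr] at h1
      rcases prime_lam.dvd_mul.mp h1 with h' | h'
      · exact absurd h' (odd_of_unit hu₁)
      · exact prime_lam.dvd_of_dvd_pow h'
    have hwodd : ¬ lam ∣ w := by
      intro h
      have h1 : lam ∣ Q := by
        rw [hQw]
        exact (dvd_pow h (by norm_num)).mul_left u₂
      have h2 : lam ∣ σa := by
        have h3 : σa = Q - 2 * (k + l') := by rw [hQ]; ring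
        rw [h3]
        exact dvd_sub h1 (lam_dvd_two.mul_right _)
      rcases hσa with h' | h' <;> rw [h'] at h2
      · exact prime_lam.not_unit (isUnit_of_dvd_one h2)
      · exact prime_lam.not_unit (isUnit_of_dvd_one (dvd_neg.mp h2))
    have hr0 : r ≠ 0 := by
      intro h
      apply hc
      have hP0 : P = 0 := by rw [hPr, h]; ring
      have hcsq0 : c ^ 2 = 0 := by rw [hPQ, hP0]; ring
      exact pow_eq_zero_iff (n := 2) (by norm_num) |>.mp hcsq0
    obtain ⟨m, r₀, hr₀, hrfac⟩ := WfDvdMonoid.max_power_factor hr0 prime_lam.irreducible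
    have hm : m ≠ 0 := by
      intro h
      rw [h, pow_zero, one_mul] at hrfac
      exact hr₀ (hrfac ▸ hrdvd)
    have hcwr : IsCoprime w r₀ := by
      obtain ⟨p, q, hpq⟩ := hcPQ
      refine ⟨q * u₂ * w, p * u₁ * lam ^ m * (lam ^ m * r₀), ?_⟩
      have hPr' : P = u₁ * (lam ^ m * r₀) ^ 2 := by rw [hPr, hrfac]
      linear_combination hpq - p * hPr' - q * hQw
    have habodd : ¬ lam ∣ a * b' := by
      intro h
      rcases prime_lam.dvd_mul.mp h with h' | h'
      · exact hda h'
      · exact hb'odd h'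
    refine keyH m (u₂ ^ 2) (-u₁ ^ 2) w r₀ (a * b') (hu₂.pow _) (hu₁.pow _).neg hwodd hr₀
      habodd hcwr ?_
    have hr4 : r ^ 4 = lam ^ (4 * m) * r₀ ^ 4 := by
      rw [hrfac, mul_pow, ← pow_mul, mul_comm m 4]
    -- (a b')² = Q² - P² = u₂² w⁴ - u₁² r⁴
    linear_combination (a^2 + P + Q) * haPQ + (b'^2 + Q - P) * hbPQ
      + (Q + u₂ * w^2) * hQw - (P + u₁ * r^2) * hPr - u₁^2 * hr4
      + (4*l' - 4*k - a^2) * hk + (a^2 - b'^2 - σa - 4*l') * hl'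
end Stmt7Aux

open Stmt7Aux in
/-- The equation `s⁴ - 1 = t²` has no solutions in `ℚ(i)` with `s·t ≠ 0`. -/
theorem stmt_7 : ¬ ∃ s t : K, s * t ≠ 0 ∧ s ^ 4 - 1 = t ^ 2 := by
  rintro ⟨s, t, hst, heq⟩
  have hs : s ≠ 0 := fun h => hst (by rw [h, zero_mul])
  have ht : t ≠ 0 := fun h => hst (by rw [h, mul_zero])
  set A : GaussianInt := IsFractionRing.num GaussianInt s with hA
  set B : GaussianInt := (IsFractionRing.den GaussianInt s : GaussianInt) with hB
  have hB0 : B ≠ 0 := nonZeroDivisors.coe_ne_zero _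
  have hBimg : algebraMap GaussianInt K B ≠ 0 := by
    rw [map_ne_zero_iff _ (IsFractionRing.injective GaussianInt K)]
    exact hB0
  have hsAB : s * algebraMap GaussianInt K B = algebraMap GaussianInt K A := by
    rw [eq_comm, ← IsFractionRing.mk'_num_den' GaussianInt s]
    rw [div_mul_eq_mul_div, mul_div_assoc, div_self hBimg, mul_one]
  have hcsq : (t * (algebraMap GaussianInt K B) ^ 2) ^ 2
      = algebraMap GaussianInt K (A ^ 4 - B ^ 4) := by
    have h4 : (s * algebraMap GaussianInt K B) ^ 4 = (algebraMap GaussianInt K A) ^ 4 := by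
      rw [hsAB]
    rw [map_sub, map_pow, map_pow]
    linear_combination (-(algebraMap GaussianInt K B) ^ 4) * heq + h4
  obtain ⟨c, hc⟩ : ∃ c : GaussianInt,
      algebraMap GaussianInt K c = t * (algebraMap GaussianInt K B) ^ 2 := by
    apply IsIntegrallyClosed.isIntegral_iff.mp
    refine ⟨Polynomial.X ^ 2 - Polynomial.C (A ^ 4 - B ^ 4),
      Polynomial.monic_X_pow_sub_C _ (by norm_num), ?_⟩
    simp only [Polynomial.eval₂_sub, Polynomial.eval₂_pow, Polynomial.eval₂_X,
      Polynomial.eval₂_C]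
    rw [hcsq]
    ring
  have hceq : A ^ 4 - B ^ 4 = c ^ 2 := by
    apply IsFractionRing.injective GaussianInt K
    rw [map_pow, hc, hcsq]
  have hA0 : A ≠ 0 := by
    intro h
    rw [h, map_zero] at hsAB
    rcases mul_eq_zero.mp hsAB with h' | h'
    · exact hs h'
    · exact hBimg h'
  have hc0 : c ≠ 0 := by
    intro h
    rw [h, map_zero] at hc
    exact (mul_ne_zero ht (pow_ne_zero 2 hBimg)) hc.symm
  exact mainL A B c
    ((IsFractionRing.num_den_reduced GaussianInt s).isCoprime) hA0 hB0 hc0 hceq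
end

section
/- If x, y, z ∈ ℚ(i) satisfy x^4 + y^4 = i·z^2 and xyz ≠ 0, then (x/y)^4 = 1 and (z/y^2)^2 = -2i. -/
/-- `ℚ(i)`, the field of Gaussian rationals, realized as the fraction field of `ℤ[i]`. -/
local notation "K" => FractionRing GaussianInt

/-- The image of `i` in `ℚ(i)`. -/
local notation "I" => (algebraMap GaussianInt (FractionRing GaussianInt) Zsqrtd.sqrtd)

open Zsqrtd
local notation "R" => GaussianInt

namespace Stmt18

/-- The prime `1 + i` of `ℤ[i]`. -/
def lam : GaussianInt := ⟨1, 1⟩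

lemma int_dvd_iff (n : ℤ) (w : R) : (n:R) ∣ w ↔ n ∣ w.re ∧ n ∣ w.im :=
  Zsqrtd.intCast_dvd n w

lemma four_dvd_iff (w : R) : (4:R) ∣ w ↔ (4:ℤ) ∣ w.re ∧ (4:ℤ) ∣ w.im := by
  have := int_dvd_iff 4 w; norm_cast at this

lemma two_dvd_iff (w : R) : (2:R) ∣ w ↔ (2:ℤ) ∣ w.re ∧ (2:ℤ) ∣ w.im := by
  have := int_dvd_iff 2 w; norm_cast at this

lemma eight_dvd_iff (w : R) : (8:R) ∣ w ↔ (8:ℤ) ∣ w.re ∧ (8:ℤ) ∣ w.im := by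
  have := int_dvd_iff 8 w; norm_cast at this

lemma lam_dvd_iff (w : R) : lam ∣ w ↔ (2:ℤ) ∣ (w.re + w.im) := by
  constructor
  · rintro ⟨c, rfl⟩
    have h1 : (lam * c).re = c.re - c.im := by
      simp [lam, Zsqrtd.re_mul]; omega
    have h2 : (lam * c).im = c.re + c.im := by
      simp [lam, Zsqrtd.im_mul]; omega
    rw [h1, h2]; omega
  · intro h
    refine ⟨⟨(w.re + w.im)/2, (w.im - w.re)/2⟩, ?_⟩
    have h2 : (2:ℤ) ∣ (w.im - w.re) := by omega
    ext
    · rw [Zsqrtd.re_mul]; simp [lam]; omega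
    · rw [Zsqrtd.im_mul]; simp [lam]; omega

lemma odd_add_odd {a b : R} (ha : ¬ lam ∣ a) (hb : ¬ lam ∣ b) : lam ∣ a + b := by
  rw [lam_dvd_iff] at *
  simp only [Zsqrtd.re_add, Zsqrtd.im_add]; omega

lemma odd_ne_zero {a : R} (ha : ¬ lam ∣ a) : a ≠ 0 := by
  rintro rfl; exact ha (dvd_zero _)

lemma norm_lam : Zsqrtd.norm lam = 2 := by decide

lemma lam_prime : Prime lam := by
  rw [← UniqueFactorizationMonoid.irreducible_iff_prime]
  constructor
  · rw [← Zsqrtd.norm_eq_one_iff, norm_lam]; decide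
  · intro a b hab
    have h := congrArg Zsqrtd.norm hab
    rw [norm_lam, Zsqrtd.norm_mul] at h
    have h2 : a.norm.natAbs * b.norm.natAbs = 2 := by
      rw [← Int.natAbs_mul, ← h]; rfl
    rcases (Nat.prime_two).eq_one_or_self_of_dvd a.norm.natAbs ⟨_, h2.symm⟩ with h' | h'
    · left; rwa [← Zsqrtd.norm_eq_one_iff]
    · right; rw [← Zsqrtd.norm_eq_one_iff]; rw [h'] at h2; omega

lemma isUnit_iff {u : R} : IsUnit u ↔ u = 1 ∨ u = -1 ∨ u = sqrtd ∨ u = -sqrtd := by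
  constructor
  · intro h
    have h1 : u.norm = 1 := (Zsqrtd.norm_eq_one_iff' (by norm_num) u).2 h
    rw [Zsqrtd.norm_def] at h1
    obtain ⟨a, b, hab⟩ : ∃ a b : ℤ, u = ⟨a, b⟩ := ⟨u.re, u.im, by ext <;> rfl⟩
    subst hab
    simp only at h1
    have h1' : a * a + b * b = 1 := by linear_combination h1
    have ha1 : a ≤ 1 := by nlinarith [mul_self_nonneg b, mul_self_nonneg (a - 1)]
    have ha2 : -1 ≤ a := by nlinarith [mul_self_nonneg b, mul_self_nonneg (a + 1)]
    have hb1 : b ≤ 1 := by nlinarith [mul_self_nonneg a, mul_self_nonneg (b - 1)]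
    have hb2 : -1 ≤ b := by nlinarith [mul_self_nonneg a, mul_self_nonneg (b + 1)]
    interval_cases a <;> interval_cases b <;>
      first
        | omega
        | exact Or.inl (by decide)
        | exact Or.inr (Or.inl (by decide))
        | exact Or.inr (Or.inr (Or.inl (by decide)))
        | exact Or.inr (Or.inr (Or.inr (by decide)))
  · rintro (rfl | rfl | rfl | rfl)
    · exact isUnit_one
    · exact IsUnit.neg isUnit_one
    · exact IsUnit.of_mul_eq_one (-sqrtd) (by decide)
    · exact IsUnit.of_mul_eq_one sqrtd (by decide)

lemma unit_odd {u : R} (h : IsUnit u) : ¬ lam ∣ u := by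
  intro hd
  exact lam_prime.not_unit (isUnit_of_dvd_unit hd h)

lemma unit_eq_of_four_dvd_sub {u v : R} (hu : IsUnit u) (hv : IsUnit v)
    (h : (4:R) ∣ u - v) : u = v := by
  rw [four_dvd_iff] at h
  rw [isUnit_iff] at hu hv
  rcases hu with rfl|rfl|rfl|rfl <;> rcases hv with rfl|rfl|rfl|rfl <;>
    simp_all <;> omega

lemma lam_ne : lam ≠ 0 := lam_prime.ne_zero
lemma lam_dvd_two : lam ∣ (2:R) := ⟨⟨1,-1⟩, by decide⟩
lemma sqrtd_unit : IsUnit (sqrtd : R) := IsUnit.of_mul_eq_one (-sqrtd) (by decide)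
lemma four_eq : (4:R) = -lam^4 := by decide
lemma two_eq : (2:R) = -sqrtd * lam^2 := by decide
lemma four_dvd_lam_pow {n : ℕ} (hn : 1 ≤ n) : (4:R) ∣ lam^(4*n) := by
  have h : 4*n = 4 + (4*n - 4) := by omega
  rw [h, pow_add, four_eq]
  exact Dvd.dvd.mul_right ⟨-1, by ring⟩ _

lemma odd_mul {a b : R} (ha : ¬ lam ∣ a) (hb : ¬ lam ∣ b) : ¬ lam ∣ a * b := by
  intro h; rcases lam_prime.dvd_mul.1 h with h | h <;> tauto

lemma odd_unit_mul {u b : R} (hu : IsUnit u) (hb : ¬ lam ∣ b) : ¬ lam ∣ u * b := by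
  intro h
  rcases lam_prime.dvd_mul.1 h with h | h
  · exact lam_prime.not_unit (isUnit_of_dvd_unit h hu)
  · exact hb h

lemma odd_of_dvd {a b : R} (hd : a ∣ b) (hb : ¬ lam ∣ b) : ¬ lam ∣ a :=
  fun h => hb (h.trans hd)

lemma int_odd_sq {a : ℤ} (h : ¬ (2:ℤ) ∣ a) : (8:ℤ) ∣ a*a - 1 := by
  obtain ⟨k, rfl⟩ : ∃ k, a = 2*k+1 := ⟨a/2, by omega⟩
  obtain ⟨m, hm⟩ := Int.even_mul_succ_self k
  exact ⟨m, by linear_combination 4*hm⟩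

lemma odd_sq {w : R} (hw : ¬ lam ∣ w) : ∃ e : R, (e = 1 ∨ e = -1) ∧ (4:R) ∣ w^2 - e := by
  obtain ⟨a, b, rfl⟩ : ∃ a b : ℤ, w = ⟨a, b⟩ := ⟨w.re, w.im, by ext <;> rfl⟩
  rw [lam_dvd_iff] at hw
  simp only at hw
  have hre : ((⟨a,b⟩:R)^2).re = a*a - b*b := by
    rw [pow_two, Zsqrtd.re_mul]; simp; ring
  have him : ((⟨a,b⟩:R)^2).im = 2*(a*b) := by
    rw [pow_two, Zsqrtd.im_mul]; simp; ring
  rcases Int.even_or_odd a with ⟨k, hk⟩ | ⟨k, hk⟩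
  · -- re even, im odd
    have h8 : (8:ℤ) ∣ b*b - 1 := int_odd_sq (by omega)
    refine ⟨-1, Or.inr rfl, ?_⟩
    rw [four_dvd_iff]
    subst hk
    obtain ⟨m, hm⟩ := h8
    constructor
    · simp only [Zsqrtd.re_sub, hre]
      have h0 : (-1 : R).re = -1 := by decide
      rw [h0]; exact ⟨k*k - 2*m, by linear_combination -hm⟩
    · simp only [Zsqrtd.im_sub, him]
      have h0 : (-1 : R).im = 0 := by decide
      rw [h0]; exact ⟨k*b, by ring⟩
  · -- re odd, im even
    have h8 : (8:ℤ) ∣ a*a - 1 := int_odd_sq (by omega)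
    have him2 : (2:ℤ) ∣ b := by omega
    refine ⟨1, Or.inl rfl, ?_⟩
    rw [four_dvd_iff]
    obtain ⟨m, hm⟩ := h8
    obtain ⟨j, rfl⟩ := him2
    constructor
    · simp only [Zsqrtd.re_sub, hre]
      have h0 : (1 : R).re = 1 := by decide
      rw [h0]; exact ⟨2*m - j*j, by linear_combination hm⟩
    · simp only [Zsqrtd.im_sub, him]
      have h0 : (1 : R).im = 0 := by decide
      rw [h0]; exact ⟨a*j, by ring⟩

lemma unit_sq {e : R} (he : e = 1 ∨ e = -1) : e^2 = 1 := by
  rcases he with rfl | rfl <;> decide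

lemma odd_pow4 {w : R} (hw : ¬ lam ∣ w) : (8:R) ∣ w^4 - 1 := by
  obtain ⟨e, he, ⟨k, hk⟩⟩ := odd_sq hw
  have h2 : (2:R) ∣ w^2 + e := by
    refine ⟨2*k + e, ?_⟩
    have : e * 2 = 2 * e := by ring
    calc w^2 + e = (w^2 - e) + 2*e := by ring
    _ = 4*k + 2*e := by rw [hk]
    _ = 2*(2*k+e) := by ring
  obtain ⟨m, hm⟩ := h2
  refine ⟨k * m, ?_⟩
  have he2 := unit_sq he
  calc w^4 - 1 = (w^2 - e)*(w^2 + e) + (e^2 - 1) := by ring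
  _ = 4*k * (2*m) + 0 := by rw [hk, hm, he2]; ring
  _ = 8*(k*m) := by ring

lemma odd_pow4' {w : R} (hw : ¬ lam ∣ w) : (4:R) ∣ w^4 - 1 := by
  obtain ⟨k, hk⟩ := odd_pow4 hw
  exact ⟨2*k, by rw [hk]; ring⟩

/-- The main descent statement: `ε₁ λ^{4n} x⁴ + ε₂ y⁴ = ε₃ z²` has no solutions
with `x, y, z` odd and `x, y` coprime, for `n ≥ 1`. -/
def LS (n : ℕ) : Prop := ∀ E₁ E₂ E₃ x y z : R, IsUnit E₁ → IsUnit E₂ → IsUnit E₃ →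
  ¬lam ∣ x → ¬lam ∣ y → ¬lam ∣ z → IsCoprime x y →
  E₁ * lam^(4*n) * x^4 + E₂ * y^4 ≠ E₃ * z^2

lemma descend (n : ℕ) (hn : 2 ≤ n) (ih : LS (n-1)) {d₁ θ x y A₂ B₂ : R}
    (hd₁ : IsUnit d₁) (hθ : IsUnit θ)
    (hx : ¬lam ∣ x) (hy : ¬lam ∣ y) (hxy : IsCoprime x y)
    (hA₂ : ¬ lam ∣ A₂)
    (hprod : A₂ * B₂ = d₁ * lam^(4*n-4) * x^4)
    (hdiff : B₂ - A₂ = -sqrtd * θ * y^2) : False := by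
  obtain ⟨u, rfl⟩ := hd₁
  have hkdvd : lam^(4*n-4) ∣ B₂ := by
    refine lam_prime.pow_dvd_of_dvd_mul_left _ hA₂ ?_
    exact ⟨(↑u:R) * x^4, by rw [hprod]; ring⟩
  obtain ⟨B₀, hB₀⟩ := hkdvd
  have hlpow : lam^(4*n-4) ≠ 0 := pow_ne_zero _ lam_ne
  have hprod₀ : A₂ * B₀ = ↑u * x^4 := by
    have h2 : lam^(4*n-4) * (A₂ * B₀) = lam^(4*n-4) * ((↑u:R) * x^4) := by
      rw [hB₀] at hprod; linear_combination hprod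
    exact mul_left_cancel₀ hlpow h2
  -- common prime of A₂ and B₀ divides both x and y
  have hnc : ∀ p : R, Prime p → p ∣ A₂ → p ∣ B₀ → False := by
    intro p hp h1 h2
    have hpd : p ∣ (↑u:R) * x^4 := hprod₀ ▸ h1.mul_right B₀
    have hpx : p ∣ x := hp.dvd_of_dvd_pow
      ((hp.dvd_mul.1 hpd).resolve_left
        (fun hu => hp.not_unit (isUnit_of_dvd_unit hu u.isUnit)))
    have hpB₂ : p ∣ B₂ := hB₀ ▸ h2.mul_left _
    have hpy : p ∣ y := by
      have h3 : p ∣ -sqrtd * θ * y^2 := hdiff ▸ (hpB₂.sub h1)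
      rcases hp.dvd_mul.1 h3 with h4 | h4
      · exact absurd (isUnit_of_dvd_unit h4 ((sqrtd_unit.neg).mul hθ)) hp.not_unit
      · exact hp.dvd_of_dvd_pow h4
    exact hp.not_unit (hxy.isUnit_of_dvd' hpx hpy)
  have hB₀odd : ¬ lam ∣ B₀ := by
    intro h
    rcases lam_prime.dvd_mul.1 (h.trans ⟨A₂, by rw [← hprod₀]; ring⟩) with h' | h'
    · exact lam_prime.not_unit (isUnit_of_dvd_unit h' u.isUnit)
    · exact hx (lam_prime.dvd_of_dvd_pow h')
  have hcop : IsCoprime A₂ B₀ :=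
    isCoprime_of_prime_dvd (fun ⟨h0, _⟩ => (odd_ne_zero hA₂) h0)
      (fun p hp h1 h2 => hnc p hp h1 h2)
  have hsplit : A₂ * ((↑u⁻¹:R) * B₀) = x^4 := by
    have hmu : (↑u⁻¹:R) * ↑u = 1 := u.inv_mul
    linear_combination (↑u⁻¹:R) * hprod₀ + x^4 * hmu
  have hcop' : IsCoprime A₂ ((↑u⁻¹:R) * B₀) :=
    (isCoprime_mul_unit_left_right u⁻¹.isUnit _ _).mpr hcop
  obtain ⟨r, εr, hr⟩ := exists_associated_pow_of_mul_eq_pow' hcop' hsplit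
  obtain ⟨s, εs, hs⟩ := exists_associated_pow_of_mul_eq_pow' hcop'.symm
    (by rw [mul_comm]; exact hsplit)
  -- hr : r^4 * εr = A₂,  hs : s^4 * εs = u⁻¹ * B₀
  have hB₀' : B₀ = ↑u * ↑εs * s^4 := by
    calc B₀ = ↑u * ((↑u⁻¹:R) * B₀) := by rw [← mul_assoc, u.mul_inv, one_mul]
    _ = ↑u * (s^4 * ↑εs) := by rw [hs]
    _ = ↑u * ↑εs * s^4 := by ring
  have hrodd : ¬ lam ∣ r := odd_of_dvd ⟨r^3 * ↑εr, by rw [← hr]; ring⟩ hA₂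
  have hsodd : ¬ lam ∣ s := by
    intro h
    exact hB₀odd (hB₀' ▸ ((dvd_pow h (by norm_num)).mul_left _))
  have hcoprs : IsCoprime s r := by
    refine isCoprime_of_prime_dvd (fun ⟨h0, _⟩ => (odd_ne_zero hsodd) h0) ?_
    intro p hp h1 h2
    refine hnc p hp ?_ ?_
    · exact hr ▸ ((dvd_pow h2 (by norm_num)).mul_right (↑εr:R))
    · exact hB₀' ▸ ((dvd_pow h1 (by norm_num)).mul_left _)
  have hfin : ((u:R) * (εs:R)) * lam^(4*(n-1)) * s^4 + (-(εr:R)) * r^4 = (-sqrtd * θ) * y^2 := by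
    have h4 : 4*(n-1) = 4*n-4 := by omega
    rw [h4]
    have hB₂' : B₂ = ↑u * ↑εs * lam^(4*n-4) * s^4 := by rw [hB₀, hB₀']; ring
    linear_combination hdiff - hB₂' - hr
  exact ih ((u:R) * (εs:R)) (-(εr:R)) (-sqrtd * θ) s r y
    (u.isUnit.mul εs.isUnit) (εr.isUnit.neg) ((sqrtd_unit.neg).mul hθ)
    hsodd hrodd hy hcoprs hfin

lemma lmain (n : ℕ) (hn : 1 ≤ n) (prev : ∀ m, 1 ≤ m → m < n → LS m) : LS n := by
  intro E₁ E₂ E₃ x y z hE1 hE2 hE3 hx hy hz hxy heq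
  obtain ⟨u₃, rfl⟩ := hE3
  have hinv : (↑u₃⁻¹ * ↑u₃ : R) = 1 := u₃.inv_mul
  have hd₁ : IsUnit ((↑u₃⁻¹:R) * E₁) := u₃⁻¹.isUnit.mul hE1
  have hd₂ : IsUnit ((↑u₃⁻¹:R) * E₂) := u₃⁻¹.isUnit.mul hE2
  set d₁ := (↑u₃⁻¹ : R) * E₁ with hd₁def
  set d₂ := (↑u₃⁻¹ : R) * E₂ with hd₂def
  have heq' : d₁ * lam^(4*n) * x^4 + d₂ * y^4 = z^2 := by
    rw [hd₁def, hd₂def]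
    linear_combination (↑u₃⁻¹:R) * heq + z^2 * hinv
  obtain ⟨e, he, hze⟩ := odd_sq hz
  have hy4 := odd_pow4' hy
  have h4X : (4:R) ∣ d₁ * lam^(4*n) * x^4 :=
    ((four_dvd_lam_pow hn).mul_left d₁).mul_right _
  have hd₂e : d₂ = e := by
    apply unit_eq_of_four_dvd_sub hd₂
      (by rcases he with rfl | rfl; exacts [isUnit_one, isUnit_one.neg])
    have h2 : d₂ - e = ((z^2 - e) - (d₁ * lam^(4*n) * x^4)) - d₂*(y^4-1) := by
      linear_combination heq'
    rw [h2]
    exact dvd_sub (dvd_sub hze h4X) (hy4.mul_left d₂)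
  obtain ⟨θ, hθ, hθ2⟩ : ∃ θ : R, IsUnit θ ∧ θ^2 = d₂ := by
    rcases he with rfl | rfl
    · exact ⟨1, isUnit_one, by rw [hd₂e]; norm_num⟩
    · exact ⟨sqrtd, sqrtd_unit, by rw [hd₂e]; decide⟩
  set A := z - θ*y^2 with hAdef
  set B := z + θ*y^2 with hBdef
  have hAB : A * B = d₁ * lam^(4*n) * x^4 := by
    have h1 : A*B = z^2 - θ^2*y^4 := by rw [hAdef, hBdef]; ring
    rw [h1, hθ2]; linear_combination -heq'
  have hABd : lam ∣ A → lam ∣ B := by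
    intro h
    have h2 : B = A + 2*(θ*y^2) := by rw [hAdef, hBdef]; ring
    rw [h2]; exact dvd_add h (lam_dvd_two.mul_right _)
  have hBAd : lam ∣ B → lam ∣ A := by
    intro h
    have h2 : A = B - 2*(θ*y^2) := by rw [hAdef, hBdef]; ring
    rw [h2]; exact dvd_sub h (lam_dvd_two.mul_right _)
  have hlamAB : lam ∣ A ∧ lam ∣ B := by
    have h1 : lam ∣ A * B := by
      rw [hAB]
      exact ((dvd_pow_self lam (by omega : 4*n ≠ 0)).mul_left d₁).mul_right _
    rcases lam_prime.dvd_mul.1 h1 with h | h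
    exacts [⟨h, hABd h⟩, ⟨hBAd h, h⟩]
  obtain ⟨⟨A₁, hA₁⟩, ⟨B₁, hB₁⟩⟩ := hlamAB
  have hprod1 : A₁ * B₁ = d₁ * lam^(4*n-2) * x^4 := by
    apply mul_left_cancel₀ (pow_ne_zero 2 lam_ne)
    have h4n : lam^(4*n) = lam^2 * lam^(4*n-2) := by rw [← pow_add]; congr 1; omega
    calc lam^2*(A₁*B₁) = (lam*A₁)*(lam*B₁) := by ring
    _ = d₁ * lam^(4*n) * x^4 := by rw [← hA₁, ← hB₁]; exact hAB
    _ = lam^2 * (d₁ * lam^(4*n-2)*x^4) := by rw [h4n]; ring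
  have hdiff1 : B₁ - A₁ = -sqrtd * lam * (θ * y^2) := by
    apply mul_left_cancel₀ lam_ne
    calc lam * (B₁ - A₁) = (lam*B₁) - (lam*A₁) := by ring
    _ = 2*(θ*y^2) := by rw [← hA₁, ← hB₁, hAdef, hBdef]; ring
    _ = lam * (-sqrtd * lam * (θ*y^2)) := by rw [two_eq]; ring
  have hlam1 : lam ∣ A₁ ∧ lam ∣ B₁ := by
    have h1 : lam ∣ A₁ * B₁ := by
      rw [hprod1]
      exact ((dvd_pow_self lam (by omega : 4*n-2 ≠ 0)).mul_left d₁).mul_right _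
    have hd : lam ∣ B₁ - A₁ := ⟨-sqrtd * (θ*y^2), by rw [hdiff1]; ring⟩
    have e1 : B₁ = A₁ + (B₁ - A₁) := by ring
    have e2 : A₁ = B₁ - (B₁ - A₁) := by ring
    rcases lam_prime.dvd_mul.1 h1 with h | h
    · exact ⟨h, by rw [e1]; exact dvd_add h hd⟩
    · exact ⟨by rw [e2]; exact dvd_sub h hd, h⟩
  obtain ⟨⟨A₂, hA₂⟩, ⟨B₂, hB₂⟩⟩ := hlam1
  have hprod2 : A₂ * B₂ = d₁ * lam^(4*n-4) * x^4 := by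
    apply mul_left_cancel₀ (pow_ne_zero 2 lam_ne)
    have h4n : lam^(4*n-2) = lam^2 * lam^(4*n-4) := by rw [← pow_add]; congr 1; omega
    calc lam^2*(A₂*B₂) = (lam*A₂)*(lam*B₂) := by ring
    _ = d₁ * lam^(4*n-2) * x^4 := by rw [← hA₂, ← hB₂]; exact hprod1
    _ = lam^2 * (d₁ * lam^(4*n-4)*x^4) := by rw [h4n]; ring
  have hdiff2 : B₂ - A₂ = -sqrtd * θ * y^2 := by
    apply mul_left_cancel₀ lam_ne
    calc lam * (B₂ - A₂) = (lam*B₂) - (lam*A₂) := by ring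
    _ = -sqrtd * lam * (θ * y^2) := by rw [← hA₂, ← hB₂]; exact hdiff1
    _ = lam * (-sqrtd * θ * y^2) := by ring
  have hsum2 : A₂ + B₂ = -sqrtd * z := by
    apply mul_left_cancel₀ (pow_ne_zero 2 lam_ne)
    calc lam^2 * (A₂ + B₂) = (lam*(lam*A₂)) + (lam*(lam*B₂)) := by ring
    _ = A + B := by rw [← hA₂, ← hB₂, ← hA₁, ← hB₁]
    _ = 2 * z := by rw [hAdef, hBdef]; ring
    _ = lam^2 * (-sqrtd * z) := by rw [two_eq]; ring
  have hzsum : ¬ lam ∣ (A₂ + B₂) := by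
    rw [hsum2]; exact odd_unit_mul sqrtd_unit.neg hz
  by_cases hn1 : n = 1
  · subst hn1
    have podd : ¬ lam ∣ A₂ * B₂ := by
      rw [hprod2]
      have h0 : d₁ * lam^(4*1-4) * x^4 = d₁ * x^4 := by norm_num
      rw [h0]
      exact odd_unit_mul hd₁ (fun h => hx (lam_prime.dvd_of_dvd_pow h))
    exact hzsum (odd_add_odd (odd_of_dvd (dvd_mul_right _ _) podd)
      (odd_of_dvd (dvd_mul_left _ _) podd))
  · have hn2 : 2 ≤ n := by omega
    have ih : LS (n-1) := prev (n-1) (by omega) (by omega)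
    have hor : ¬lam∣A₂ ∨ ¬lam∣B₂ := by
      by_contra h
      push_neg at h
      exact hzsum (dvd_add h.1 h.2)
    rcases hor with hA₂o | hB₂o
    · exact descend n hn2 ih hd₁ hθ hx hy hxy hA₂o hprod2 hdiff2
    · refine descend n hn2 ih hd₁ hθ.neg hx hy hxy hB₂o
        (by rw [mul_comm]; exact hprod2) ?_
      linear_combination -hdiff2

lemma lkey : ∀ n, 1 ≤ n → LS n := by
  intro n
  induction n using Nat.strong_induction_on with
  | _ n ih => exact fun hn => lmain n hn (fun m h1 h2 => ih m h2 h1)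

lemma lam_sq : lam^2 = 2*sqrtd := by decide
lemma two_ne : (2:R) ≠ 0 := by decide
lemma four_ne : (4:R) ≠ 0 := by decide

lemma prime_not_dvd_of_odd {p g : R} (hp : Prime p) (h2 : p ∣ (2:R)) (hg : ¬ lam ∣ g) :
    ¬ p ∣ g := by
  intro hpg
  have h1 : p ∣ lam * lam := by
    have e1 : lam * lam = 2 * sqrtd := by rw [← lam_sq]; ring
    rw [e1]
    exact h2.mul_right sqrtd
  have h3 : p ∣ lam := (hp.dvd_mul.1 h1).elim id id
  obtain ⟨t, ht⟩ := h3
  rcases lam_prime.irreducible.isUnit_or_isUnit ht with h | h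
  · exact hp.not_unit h
  · obtain ⟨tu, rfl⟩ := h
    have h4 : lam ∣ p := ⟨↑tu⁻¹, by rw [ht, mul_assoc, Units.mul_inv, mul_one]⟩
    exact hg (h4.trans hpg)

lemma ed : (sqrtd:R)^2 = -1 := by decide
lemma hL4 : lam^4 = (-4:R) := by decide
lemma two_sqrtd_ne : (2*sqrtd : R) ≠ 0 := by decide

/-- Auxiliary: `a⁴ - b⁴ = c²` with `a,b` odd coprime and `4 ∣ a² - b²` forces `c = 0`. -/
lemma hp_aux {a b c : R} (ha : ¬ lam ∣ a) (hb : ¬ lam ∣ b) (hab : IsCoprime a b)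
    (h4 : (4:R) ∣ a^2 - b^2) (heq : a^4 - b^4 = c^2) : c = 0 := by
  by_contra hc
  obtain ⟨ea, hea, ⟨ka, hka⟩⟩ := odd_sq ha
  obtain ⟨eb, heb, ⟨kb, hkb⟩⟩ := odd_sq hb
  set g : R := ea + 2*(ka + kb) with hgdef
  have heab : ea = eb := by
    apply unit_eq_of_four_dvd_sub
      (by rcases hea with rfl | rfl; exacts [isUnit_one, isUnit_one.neg])
      (by rcases heb with rfl | rfl; exacts [isUnit_one, isUnit_one.neg])
    have h2 : ea - eb = (b^2 - eb) - (a^2 - ea) + (a^2 - b^2) := by ring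
    rw [h2]
    exact dvd_add (dvd_sub ⟨kb, hkb⟩ ⟨ka, hka⟩) h4
  have hg : a^2 + b^2 = 2 * g := by
    rw [hgdef]
    have h1 : a^2 + b^2 = (a^2 - ea) + (b^2 - eb) + (ea + eb) := by ring
    rw [h1, hka, hkb, ← heab]; ring
  have hgodd : ¬ lam ∣ g := by
    intro hdvd
    have h1 : ea = g - 2*(ka+kb) := by rw [hgdef]; ring
    have h2 : lam ∣ ea := h1 ▸ dvd_sub hdvd (lam_dvd_two.mul_right _)
    exact unit_odd (by rcases hea with rfl | rfl; exacts [isUnit_one, isUnit_one.neg]) h2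
  have hg0 : g ≠ 0 := odd_ne_zero hgodd
  obtain ⟨m, hm⟩ := h4
  have hc2 : c^2 = 8*(m*g) := by
    calc c^2 = a^4 - b^4 := heq.symm
    _ = (a^2-b^2)*(a^2+b^2) := by ring
    _ = (4*m)*(2*g) := by rw [← hm, ← hg]
    _ = 8*(m*g) := by ring
  have hm0 : m ≠ 0 := by
    rintro rfl
    have h1 : c^2 = 0 := by rw [hc2]; ring
    exact hc (pow_eq_zero_iff (by norm_num : (2:ℕ) ≠ 0) |>.1 h1)
  have lam_dvd_four : lam ∣ (4:R) := lam_dvd_two.trans ⟨2, by norm_num⟩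
  have lam_dvd_eight : lam ∣ (8:R) := lam_dvd_two.trans ⟨4, by norm_num⟩
  have hlc : lam ∣ c := by
    refine lam_prime.dvd_of_dvd_pow (n := 2) ?_
    rw [hc2]; exact lam_dvd_eight.mul_right _
  obtain ⟨c₁, hc₁⟩ := hlc
  rw [hc₁] at hc2
  have hc₁2 : c₁^2 = -4*sqrtd*(m*g) := by
    apply mul_left_cancel₀ two_sqrtd_ne
    linear_combination hc2 - c₁^2*lam_sq + 8*(m*g)*ed
  have hlc₁ : lam ∣ c₁ := by
    refine lam_prime.dvd_of_dvd_pow (n := 2) ?_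
    have h1 : c₁^2 = 4*(-(sqrtd*(m*g))) := by rw [hc₁2]; ring
    rw [h1]; exact lam_dvd_four.mul_right _
  obtain ⟨c₂, hc₂⟩ := hlc₁
  rw [hc₂] at hc₁2
  have hc₂2 : c₂^2 = -2*(m*g) := by
    apply mul_left_cancel₀ two_sqrtd_ne
    linear_combination hc₁2 - c₂^2*lam_sq
  have hlc₂ : lam ∣ c₂ := by
    refine lam_prime.dvd_of_dvd_pow (n := 2) ?_
    have h1 : c₂^2 = 2*(-(m*g)) := by rw [hc₂2]; ring
    rw [h1]; exact lam_dvd_two.mul_right _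
  obtain ⟨c₃, hc₃⟩ := hlc₂
  rw [hc₃] at hc₂2
  have hstep3 : m*g = -sqrtd*c₃^2 := by
    apply mul_left_cancel₀ two_ne
    linear_combination hc₂2 - c₃^2*lam_sq
  have hmg : ∀ p : R, Prime p → p ∣ m → p ∣ g → False := by
    intro p hp h1 h2
    by_cases hp2 : p ∣ (2:R)
    · exact prime_not_dvd_of_odd hp hp2 hgodd h2
    · have hpa2 : p ∣ (2:R)*a^2 := by
        have e1 : (2:R)*a^2 = (a^2-b^2) + (a^2+b^2) := by ring
        rw [e1, hm, hg]
        exact dvd_add (h1.mul_left 4) (h2.mul_left 2)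
      have hpb2 : p ∣ (2:R)*b^2 := by
        have e1 : (2:R)*b^2 = (a^2+b^2) - (a^2-b^2) := by ring
        rw [e1, hm, hg]
        exact dvd_sub (h2.mul_left 2) (h1.mul_left 4)
      have hpa : p ∣ a := hp.dvd_of_dvd_pow ((hp.dvd_mul.1 hpa2).resolve_left hp2)
      have hpb : p ∣ b := hp.dvd_of_dvd_pow ((hp.dvd_mul.1 hpb2).resolve_left hp2)
      exact hp.not_unit (hab.isUnit_of_dvd' hpa hpb)
  have hc₃0 : c₃ ≠ 0 := by
    rintro rfl
    rcases mul_eq_zero.1 (by rw [hstep3]; ring : m*g = 0) with h | h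
    exacts [hm0 h, hg0 h]
  have hcopmg : IsCoprime m g :=
    isCoprime_of_prime_dvd (fun ⟨h0,_⟩ => hm0 h0) hmg
  have hsp : (sqrtd*m)*g = c₃^2 := by
    linear_combination sqrtd*hstep3 - c₃^2*ed
  have hcop2 : IsCoprime (sqrtd*m) g := (isCoprime_mul_unit_left_left sqrtd_unit m g).mpr hcopmg
  obtain ⟨q, εq, hq⟩ := exists_associated_pow_of_mul_eq_pow' hcop2 hsp
  obtain ⟨p, εp, hp2⟩ := exists_associated_pow_of_mul_eq_pow' hcop2.symm
    (by rw [mul_comm]; exact hsp)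
  -- hq : q^2 * εq = sqrtd*m,  hp2 : p^2*εp = g
  have hmeq : m = -sqrtd * (↑εq:R) * q^2 := by
    linear_combination sqrtd*hq + m*ed
  have hq0 : q ≠ 0 := by
    rintro rfl
    exact hm0 (by rw [hmeq]; ring)
  have hpg : p ∣ g := ⟨p*(↑εp:R), by rw [← hp2]; ring⟩
  have hpodd : ¬ lam ∣ p := odd_of_dvd hpg hgodd
  have habsq : (a*b)^2 = g^2 - 4*m^2 := by
    apply mul_left_cancel₀ four_ne
    calc (4:R)*(a*b)^2 = (a^2+b^2)^2 - (a^2-b^2)^2 := by ring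
    _ = (2*g)^2 - (4*m)^2 := by rw [← hg, ← hm]
    _ = 4*(g^2-4*m^2) := by ring
  obtain ⟨j, q₀, hq₀odd, hq₀⟩ := WfDvdMonoid.max_power_factor hq0 lam_prime.irreducible
  have hmeq' : m = -sqrtd * (↑εq:R) * (lam^j*q₀)^2 := by rw [← hq₀]; exact hmeq
  have hT : (a*b)^2 = (↑εp:R)^2*p^4 + (-4)*((-sqrtd*(↑εq:R))^2*((lam^j)^4*q₀^4)) := by
    calc (a*b)^2 = g^2 - 4*m^2 := habsq
    _ = (p^2*(↑εp:R))^2 - 4*(-sqrtd*(↑εq:R)*(lam^j*q₀)^2)^2 := by rw [← hp2, hmeq']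
    _ = (↑εp:R)^2*p^4 + (-4)*((-sqrtd*(↑εq:R))^2*((lam^j)^4*q₀^4)) := by ring
  have e4 : lam^(4*(j+1)) = (-4:R) * (lam^j)^4 := by
    have h1 : lam^(4*(j+1)) = lam^4 * lam^(j*4) := by rw [← pow_add]; congr 1; omega
    rw [h1, hL4, pow_mul]
  have hcopq₀p : IsCoprime q₀ p := by
    refine isCoprime_of_prime_dvd (fun ⟨h0,_⟩ => odd_ne_zero hq₀odd h0) ?_
    intro t ht h1 h2
    refine hmg t ht ?_ (h2.trans hpg)
    have hq₀q : q₀ ∣ q := ⟨lam^j, by rw [hq₀]; ring⟩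
    have hqm : q ∣ m := ⟨-sqrtd*(↑εq:R)*q, by rw [hmeq]; ring⟩
    exact (h1.trans hq₀q).trans hqm
  refine lkey (j+1) (by omega) ((-sqrtd*(↑εq:R))^2) ((↑εp:R)^2) 1 q₀ p (a*b)
    (((sqrtd_unit.neg).mul εq.isUnit).pow 2) ((εp.isUnit).pow 2) isUnit_one
    hq₀odd hpodd (odd_mul ha hb) hcopq₀p ?_
  rw [e4]
  linear_combination -hT

/-- `a⁴ - b⁴ = c²` with `a, b` odd and coprime forces `c = 0`. -/
lemma hprime {a b c : R} (ha : ¬ lam ∣ a) (hb : ¬ lam ∣ b) (hab : IsCoprime a b)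
    (heq : a^4 - b^4 = c^2) : c = 0 := by
  obtain ⟨ea, hea, hka⟩ := odd_sq ha
  obtain ⟨eb, heb, hkb⟩ := odd_sq hb
  by_cases he : ea = eb
  · refine hp_aux ha hb hab ?_ heq
    have h2 : a^2 - b^2 = (a^2 - ea) - (b^2 - eb) + (ea - eb) := by ring
    have h3 : ea - eb = 0 := by rw [he, sub_self]
    rw [h2, h3, add_zero]
    exact dvd_sub hka hkb
  · have hb' : ¬ lam ∣ sqrtd*b := odd_unit_mul sqrtd_unit hb
    have hab' : IsCoprime a (sqrtd*b) := (isCoprime_mul_unit_left_right sqrtd_unit a b).mpr hab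
    have heq' : a^4 - (sqrtd*b)^4 = c^2 := by
      have e1 : (sqrtd:R)^4 = 1 := by decide
      linear_combination heq - b^4*e1
    refine hp_aux ha hb' hab' ?_ heq'
    have heab : ea + eb = 0 := by
      rcases hea with rfl | rfl <;> rcases heb with rfl | rfl
      · exact absurd rfl he
      · ring
      · ring
      · exact absurd rfl he
    have h2 : a^2 - (sqrtd*b)^2 = (a^2 - ea) + (b^2 - eb) + (ea + eb) + (-sqrtd^2-1)*b^2 := by
      ring
    rw [h2, heab, add_zero]
    have e2 : (-sqrtd^2-1 : R) = 0 := by decide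
    rw [e2, zero_mul, add_zero]
    exact dvd_add hka hkb

/-- In `a⁴ + b⁴ = i·c²` with `a, b` coprime, `a` must be odd. -/
lemma not_lam_dvd_first {a b c : R} (hab : IsCoprime a b)
    (heq : a^4 + b^4 = sqrtd * c^2) : ¬ lam ∣ a := by
  intro hla
  have hlb : ¬ lam ∣ b := fun hlb =>
    lam_prime.not_unit (hab.isUnit_of_dvd' hla hlb)
  have h4a : (4:R) ∣ a^4 := by
    obtain ⟨t, ht⟩ := pow_dvd_pow_of_dvd hla 4
    exact ⟨-t, by rw [ht]; linear_combination t*hL4⟩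
  have h1 : (4:R) ∣ sqrtd*c^2 - 1 := by
    have e1 : sqrtd*c^2 - 1 = a^4 + (b^4 - 1) := by linear_combination -heq
    rw [e1]
    exact dvd_add h4a (odd_pow4' hlb)
  by_cases hlc : lam ∣ c
  · obtain ⟨c₁, hc₁⟩ := hlc
    have h2 : lam ∣ sqrtd*c^2 := by
      rw [hc₁]
      exact ⟨sqrtd*lam*c₁^2, by ring⟩
    have h3 : lam ∣ (1:R) := by
      have e1 : (1:R) = sqrtd*c^2 - (sqrtd*c^2 - 1) := by ring
      rw [e1]
      exact dvd_sub h2 ((lam_dvd_two.trans ⟨2, by norm_num⟩).trans h1)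
    exact lam_prime.not_unit (isUnit_of_dvd_one h3)
  · obtain ⟨e, he, hce⟩ := odd_sq hlc
    have h2 : (4:R) ∣ sqrtd*e - 1 := by
      have e1 : sqrtd*e - 1 = (sqrtd*c^2 - 1) - sqrtd*(c^2 - e) := by ring
      rw [e1]
      exact dvd_sub h1 (hce.mul_left sqrtd)
    have h3 : sqrtd*e = 1 := by
      refine unit_eq_of_four_dvd_sub ?_ isUnit_one h2
      exact sqrtd_unit.mul (by rcases he with rfl | rfl; exacts [isUnit_one, isUnit_one.neg])
    rcases he with rfl | rfl
    · rw [mul_one] at h3; exact absurd h3 (by decide)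
    · exact absurd h3 (by decide)

/-- Coprime case of the main theorem over `ℤ[i]`. -/
lemma main_coprime {a b c : R} (hab : IsCoprime a b) (hc : c ≠ 0)
    (heq : a^4 + b^4 = sqrtd * c^2) : a^4 = b^4 := by
  have ha : ¬ lam ∣ a := not_lam_dvd_first hab heq
  have hb : ¬ lam ∣ b := not_lam_dvd_first (c:=c) hab.symm (by linear_combination heq)
  have h8 : (8:R) ∣ a^4 + b^4 - 2 := by
    have e1 : a^4 + b^4 - 2 = (a^4 - 1) + (b^4 - 1) := by ring
    rw [e1]
    exact dvd_add (odd_pow4 ha) (odd_pow4 hb)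
  have h48 : (4:R) ∣ (8:R) := ⟨2, by norm_num⟩
  have hlc : lam ∣ c := by
    by_contra hlc
    obtain ⟨e, he, hce⟩ := odd_sq hlc
    have h1 : (4:R) ∣ sqrtd*e - 2 := by
      have e1 : sqrtd*e - 2 = (a^4 + b^4 - 2) - sqrtd*(c^2 - e) := by
        linear_combination -heq
      rw [e1]
      exact dvd_sub (h48.trans h8) (hce.mul_left sqrtd)
    rcases he with rfl | rfl
    · have e2 : sqrtd*(1:R) - 2 = (⟨-2,1⟩ : R) := by decide
      rw [e2, four_dvd_iff] at h1
      simp only at h1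
      omega
    · have e2 : sqrtd*(-1:R) - 2 = (⟨-2,-1⟩ : R) := by decide
      rw [e2, four_dvd_iff] at h1
      simp only at h1
      omega
  obtain ⟨c₁, hc₁⟩ := hlc
  have heq2 : a^4 + b^4 = -2 * c₁^2 := by
    rw [hc₁] at heq
    have e1 : sqrtd*(lam*c₁)^2 = sqrtd*lam^2*c₁^2 := by ring
    rw [e1, lam_sq] at heq
    linear_combination heq + 2*c₁^2*ed
  have hc₁odd : ¬ lam ∣ c₁ := by
    rintro ⟨c₂, hc₂⟩
    rw [hc₂] at heq2
    have h1 : (4:R) ∣ (2:R) := by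
      have e1 : (2:R) = -(a^4+b^4-2) + (a^4+b^4) := by ring
      rw [e1]
      refine dvd_add (dvd_neg.2 (h48.trans h8)) ?_
      rw [heq2]
      refine ⟨-(sqrtd*c₂^2), ?_⟩
      have e2 : -2*(lam*c₂)^2 = -2*lam^2*c₂^2 := by ring
      rw [e2, lam_sq]; ring
    have e3 : (2:R) = (⟨2,0⟩ : R) := by decide
    rw [e3, four_dvd_iff] at h1
    simp only at h1
    omega
  have h8' : (8:R) ∣ a^4 - b^4 := by
    have e1 : a^4 - b^4 = (a^4 - 1) - (b^4 - 1) := by ring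
    rw [e1]
    exact dvd_sub (odd_pow4 ha) (odd_pow4 hb)
  obtain ⟨d, hd⟩ := h8'
  have hkey : c₁^4 - (a*b)^4 = (4*d)^2 := by
    apply mul_left_cancel₀ four_ne
    linear_combination (-(a^4+b^4) + 2*c₁^2)*heq2 + (a^4-b^4+8*d)*hd
  have hcop : IsCoprime c₁ (a*b) := by
    refine isCoprime_of_prime_dvd (fun ⟨h0,_⟩ => odd_ne_zero hc₁odd h0) ?_
    intro p hp h1 h2
    have hpc2 : p ∣ (2:R)*c₁^2 := (dvd_pow h1 (by norm_num : (2:ℕ) ≠ 0)).mul_left 2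
    rcases hp.dvd_mul.1 h2 with h3 | h3
    · have hpb : p ∣ b := by
        refine hp.dvd_of_dvd_pow (n := 4) ?_
        have e1 : b^4 = -(2*c₁^2) - a^4 := by linear_combination heq2
        rw [e1]
        exact dvd_sub (dvd_neg.2 hpc2) (dvd_pow h3 (by norm_num))
      exact hp.not_unit (hab.isUnit_of_dvd' h3 hpb)
    · have hpa : p ∣ a := by
        refine hp.dvd_of_dvd_pow (n := 4) ?_
        have e1 : a^4 = -(2*c₁^2) - b^4 := by linear_combination heq2
        rw [e1]
        exact dvd_sub (dvd_neg.2 hpc2) (dvd_pow h3 (by norm_num))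
      exact hp.not_unit (hab.isUnit_of_dvd' hpa h3)
  have hd0 : (4:R)*d = 0 := hprime hc₁odd (odd_mul ha hb) hcop hkey
  have hd0' : d = 0 := by
    rcases mul_eq_zero.1 hd0 with h | h
    · exact absurd h four_ne
    · exact h
  rw [hd0', mul_zero] at hd
  exact sub_eq_zero.1 hd

/-- Main theorem over `ℤ[i]`: `a⁴ + b⁴ = i·c²` nontrivially forces `a⁴ = b⁴`. -/
lemma main_int {a b c : R} (ha : a ≠ 0) (hc : c ≠ 0)
    (heq : a^4 + b^4 = sqrtd * c^2) : a^4 = b^4 := by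
  obtain ⟨a', b', g, hrel, hga, hgb⟩ :=
    UniqueFactorizationMonoid.exists_reduced_factors a ha b
  have hg0 : g ≠ 0 := fun h => ha (by rw [← hga, h, zero_mul])
  have hcop : IsCoprime a' b' := hrel.isCoprime
  rw [← hga, ← hgb] at heq
  have hdvd : g^2 ∣ c := by
    have e1 : c^2 = (g^2)^2 * (-sqrtd*(a'^4+b'^4)) := by
      linear_combination sqrtd*heq + c^2*ed
    exact (IsIntegrallyClosed.pow_dvd_pow_iff (by norm_num : 2 ≠ 0)).1 ⟨_, e1⟩
  obtain ⟨c', hc'⟩ := hdvd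
  have heq' : a'^4 + b'^4 = sqrtd * c'^2 := by
    apply mul_left_cancel₀ (pow_ne_zero 4 hg0)
    calc g^4*(a'^4+b'^4) = (g*a')^4 + (g*b')^4 := by ring
    _ = sqrtd * c^2 := heq
    _ = sqrtd * (g^2*c')^2 := by rw [← hc']
    _ = g^4 * (sqrtd * c'^2) := by ring
  have hc'0 : c' ≠ 0 := by
    rintro rfl
    rw [mul_zero] at hc'
    exact hc hc'
  have h := main_coprime hcop hc'0 heq'
  calc a^4 = g^4 * a'^4 := by rw [← hga]; ring
  _ = g^4 * b'^4 := by rw [h]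
  _ = b^4 := by rw [← hgb]; ring

end Stmt18

/-- If `x, y, z ∈ ℚ(i)` satisfy `x⁴ + y⁴ = i·z²` with `xyz ≠ 0`, then `(x/y)⁴ = 1`
and `(z/y²)² = -2i`. -/
theorem stmt_18 (x y z : K) (hnt : x * y * z ≠ 0)
    (heq : x ^ 4 + y ^ 4 = I * z ^ 2) :
    (x / y) ^ 4 = 1 ∧ (z / y ^ 2) ^ 2 = -(2 * I) := by
  have hx : x ≠ 0 := fun h => hnt (by rw [h, zero_mul, zero_mul])
  have hy : y ≠ 0 := fun h => hnt (by rw [h, mul_zero, zero_mul])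
  have hz : z ≠ 0 := fun h => hnt (by rw [h, mul_zero])
  set f := algebraMap GaussianInt K with hf
  have hinj : Function.Injective f := IsFractionRing.injective GaussianInt K
  obtain ⟨a₁, d₁, hd₁, hx1⟩ := IsFractionRing.div_surjective (A := GaussianInt) x
  obtain ⟨a₂, d₂, hd₂, hy1⟩ := IsFractionRing.div_surjective (A := GaussianInt) y
  obtain ⟨a₃, d₃, hd₃, hz1⟩ := IsFractionRing.div_surjective (A := GaussianInt) z
  have hfd₁ : f d₁ ≠ 0 := IsFractionRing.to_map_ne_zero_of_mem_nonZeroDivisors hd₁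
  have hfd₂ : f d₂ ≠ 0 := IsFractionRing.to_map_ne_zero_of_mem_nonZeroDivisors hd₂
  have hfd₃ : f d₃ ≠ 0 := IsFractionRing.to_map_ne_zero_of_mem_nonZeroDivisors hd₃
  have ha₁ : f a₁ = x * f d₁ := by rw [← hx1]; exact (div_mul_cancel₀ _ hfd₁).symm
  have ha₂ : f a₂ = y * f d₂ := by rw [← hy1]; exact (div_mul_cancel₀ _ hfd₂).symm
  have ha₃ : f a₃ = z * f d₃ := by rw [← hz1]; exact (div_mul_cancel₀ _ hfd₃).symm
  set A : R := a₁*(d₂*d₃) with hA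
  set B : R := a₂*(d₁*d₃) with hB
  set C : R := a₃*(d₁^2*d₂^2*d₃) with hC
  set T : K := f d₁ * f d₂ * f d₃ with hT
  have hTne : T ≠ 0 := mul_ne_zero (mul_ne_zero hfd₁ hfd₂) hfd₃
  have hfA : f A = x * T := by rw [hA, map_mul, map_mul, ha₁, hT]; ring
  have hfB : f B = y * T := by rw [hB, map_mul, map_mul, ha₂, hT]; ring
  have hfC : f C = z * T^2 := by
    rw [hC]; simp only [map_mul, map_pow]; rw [ha₃, hT]; ring
  have hkey : A^4 + B^4 = sqrtd * C^2 := by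
    apply hinj
    have e1 : f (A^4 + B^4) = (f A)^4 + (f B)^4 := by
      rw [map_add, map_pow, map_pow]
    have e2 : f (sqrtd * C^2) = f sqrtd * (f C)^2 := by
      rw [map_mul, map_pow]
    rw [e1, e2, hfA, hfB, hfC]
    linear_combination T^4 * heq
  have hAne : A ≠ 0 := by
    intro h
    apply mul_ne_zero hx hTne
    rw [← hfA, h, map_zero]
  have hCne : C ≠ 0 := by
    intro h
    apply mul_ne_zero hz (pow_ne_zero 2 hTne)
    rw [← hfC, h, map_zero]
  have hA4 : A^4 = B^4 := Stmt18.main_int hAne hCne hkey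
  have hC2 : C^2 = -2*sqrtd*B^4 := by
    have hR' : 2*B^4 = sqrtd*C^2 := by rw [hA4] at hkey; linear_combination hkey
    linear_combination sqrtd*hR' + C^2*Stmt18.ed
  -- back to K
  have hxy4 : x^4 = y^4 := by
    have h1 : (f A)^4 = (f B)^4 := by rw [← map_pow, ← map_pow, hA4]
    rw [hfA, hfB] at h1
    have h2 : x^4 * T^4 = y^4 * T^4 := by linear_combination h1
    exact mul_right_cancel₀ (pow_ne_zero 4 hTne) h2
  have hz2 : z^2 = -(2*I) * y^4 := by
    have h1 : f (C^2) = f (-2*sqrtd*B^4) := by rw [hC2]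
    rw [map_pow, hfC, map_mul, map_mul, map_pow, hfB] at h1
    have h2 : z^2 * T^4 = (-(2*I) * y^4) * T^4 := by
      have e3 : f (-2 : R) = -2 := by rw [map_neg, map_ofNat]
      rw [e3] at h1
      linear_combination h1
    exact mul_right_cancel₀ (pow_ne_zero 4 hTne) h2
  constructor
  · rw [div_pow, hxy4, div_self (pow_ne_zero 4 hy)]
  · rw [div_pow, hz2, div_eq_iff (pow_ne_zero 2 (pow_ne_zero 2 hy))]
    ring
end
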